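/- Let k be an algebraically closed field of characteristic 3. The hyperelliptic genus-4 curve y^2 = f(x) with f(x) = x^9 + x^3 + 2x^7 + x (i.e., a_3 = 1, a_7 = 2, all other middle coefficients 0) satisfies disc(f) ≠ 0 and its Cartier–Manin matrix has rank exactly 2; hence the curve has a-number 2. -/
import Mathlib
open Polynomial Matrix

noncomputable def disc9 {k : Type*} [Field k] (f : Polynomial k) : k :=
  (Matrix.of fun i j : Fin 17 =>
    if (i : ℕ) < 8 then
      (if (j : ℕ) ≤ (i : ℕ) + 9 then f.coeff (9 + (i : ℕ) - (j : ℕ)) else 0)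
    else
      (if (j : ℕ) ≤ (i : ℕ) then (Polynomial.derivative f).coeff ((i : ℕ) - (j : ℕ)) else 0)).det

def g3 : ℕ → ZMod 3 := fun n =>
  if n = 9 then 1 else if n = 7 then 2 else if n = 3 then 1 else if n = 1 then 1 else 0

def g3' : ℕ → ZMod 3 := fun n => g3 (n + 1) * ((n + 1 : ℕ) : ZMod 3)

def A17 : Matrix (Fin 17) (Fin 17) (ZMod 3) :=
  Matrix.of fun i j : Fin 17 =>
    if (i : ℕ) < 8 then
      (if (j : ℕ) ≤ (i : ℕ) + 9 then g3 (9 + (i : ℕ) - (j : ℕ)) else 0)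
    else
      (if (j : ℕ) ≤ (i : ℕ) then g3' ((i : ℕ) - (j : ℕ)) else 0)

def B17 : Matrix (Fin 17) (Fin 17) (ZMod 3) :=
!![1,0,0,0,0,0,1,0,2,0,0,0,2,0,2,0,0;0,1,0,0,0,0,0,1,0,2,0,0,0,2,0,2,0;0,0,2,0,0,0,0,0,1,0,1,0,0,0,0,0,0;0,0,0,2,0,0,0,0,0,1,0,1,0,0,0,0,0;0,0,0,0,2,0,0,0,0,0,1,0,1,0,0,0,0;0,0,0,0,0,2,0,0,0,0,0,1,0,1,0,0,0;0,0,0,0,0,0,2,0,0,0,0,0,1,0,1,0,0;0,0,0,0,0,0,0,2,0,0,0,0,0,1,0,1,0;0,0,2,0,0,0,0,0,2,0,1,0,0,0,0,0,0;0,0,0,2,0,0,0,0,0,2,0,1,0,0,0,0,0;0,0,0,0,2,0,0,0,0,0,2,0,1,0,0,0,0;0,0,0,0,0,2,0,0,0,0,0,2,0,1,0,0,0;0,0,0,0,0,0,2,0,0,0,0,0,2,0,1,0,0;0,0,0,0,0,0,0,2,0,0,0,0,0,2,0,1,0;0,0,2,0,0,0,0,0,2,0,1,0,0,0,1,0,0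;0,0,0,2,0,0,0,0,0,2,0,1,0,0,0,1,0;0,0,0,0,2,0,0,0,0,0,2,0,1,0,0,0,1]

set_option maxRecDepth 100000 in
lemma hAB17 : A17 * B17 = 1 := by decide

lemma detA17_ne_zero : A17.det ≠ 0 := Matrix.det_ne_zero_of_right_inverse hAB17

set_option maxRecDepth 100000 in
set_option maxHeartbeats 1000000 in
lemma disc9_ne {k : Type*} [Field k] [CharP k 3]
    (f : k[X]) (hf : f = X ^ 9 + C 2 * X ^ 7 + X ^ 3 + X) : disc9 f ≠ 0 := by
  haveI : Fact (Nat.Prime 3) := ⟨by norm_num⟩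
  set φ : ZMod 3 →+* k := ZMod.castHom dvd_rfl k with hφ
  have hc : ∀ n : ℕ, f.coeff n = φ (g3 n) := by
    intro n
    subst hf
    simp only [coeff_add, coeff_X_pow, coeff_C_mul, coeff_X, g3]
    split_ifs <;> first
      | (exfalso; omega)
      | simp [map_ofNat]
  have hd : ∀ n : ℕ, (Polynomial.derivative f).coeff n = φ (g3' n) := by
    intro n
    rw [Polynomial.coeff_derivative, hc]
    show φ (g3 (n + 1)) * ((n : k) + 1) = φ (g3 (n + 1) * ((n + 1 : ℕ) : ZMod 3))
    rw [_root_.map_mul, map_natCast]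
    push_cast
    ring
  have hM : (Matrix.of fun i j : Fin 17 =>
      if (i : ℕ) < 8 then
        (if (j : ℕ) ≤ (i : ℕ) + 9 then f.coeff (9 + (i : ℕ) - (j : ℕ)) else 0)
      else
        (if (j : ℕ) ≤ (i : ℕ) then (Polynomial.derivative f).coeff ((i : ℕ) - (j : ℕ)) else 0))
      = A17.map φ := by
    ext i j
    simp only [Matrix.map_apply, Matrix.of_apply, A17, hc, hd]
    split_ifs <;> simp
  have key : disc9 f = (A17.map φ).det := congrArg Matrix.det hM
  have hmul : (A17.map ⇑φ) * (B17.map ⇑φ) = 1 := by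
    rw [← Matrix.map_mul, hAB17, Matrix.map_one _ (map_zero φ) (map_one φ)]
  rw [key]
  exact Matrix.det_ne_zero_of_right_inverse hmul

lemma rank_part {k : Type*} [Field k] [CharP k 3]
    (H : Matrix (Fin 4) (Fin 4) k)
    (hH : ∀ i j, H i j ^ 3 = !![0, 1, 0, 0; 0, 0, 1, 0; 0, 2, 0, 0; 0, 0, 1, 0] i j) :
    H.rank = 2 := by
  haveI : Fact (Nat.Prime 3) := ⟨by norm_num⟩
  have h3 : (3 : k) = 0 := CharP.cast_eq_zero k 3
  have hHT : H = !![0, 1, 0, 0; 0, 0, 1, 0; 0, 2, 0, 0; 0, 0, 1, 0] := by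
    ext i j
    apply frobenius_inj k 3
    rw [frobenius_def, frobenius_def, hH i j]
    fin_cases i <;> fin_cases j <;>
      simp [Matrix.cons_val_zero, Matrix.cons_val_one, Matrix.head_cons,
        Matrix.cons_val', Matrix.empty_val', Matrix.cons_val_fin_one,
        Matrix.vecHead, Matrix.vecTail] <;>
      linear_combination (-2 : k) * h3
  subst hHT
  classical
  have hP : IsUnit (!![1,0,0,0;0,1,0,0;1,0,1,0;0,2,0,1] : Matrix (Fin 4) (Fin 4) k).det := by
    have h : (!![1,0,0,0;0,1,0,0;1,0,1,0;0,2,0,1] : Matrix (Fin 4) (Fin 4) k) *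
        !![1,0,0,0;0,1,0,0;-1,0,1,0;0,-2,0,1] = 1 := by
      ext i j
      fin_cases i <;> fin_cases j <;>
        simp [Matrix.mul_apply, Fin.sum_univ_four, Matrix.vecHead, Matrix.vecTail]
    exact Matrix.isUnit_det_of_right_inverse h
  have hQ : IsUnit (!![0,0,1,0;1,0,0,0;0,1,0,0;0,0,0,1] : Matrix (Fin 4) (Fin 4) k).det := by
    have h : (!![0,0,1,0;1,0,0,0;0,1,0,0;0,0,0,1] : Matrix (Fin 4) (Fin 4) k) *
        !![0,1,0,0;0,0,1,0;1,0,0,0;0,0,0,1] = 1 := by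
      ext i j
      fin_cases i <;> fin_cases j <;>
        simp [Matrix.mul_apply, Fin.sum_univ_four, Matrix.vecHead, Matrix.vecTail]
    exact Matrix.isUnit_det_of_right_inverse h
  have hPT : (!![1,0,0,0;0,1,0,0;1,0,1,0;0,2,0,1] : Matrix (Fin 4) (Fin 4) k) *
      !![0, 1, 0, 0; 0, 0, 1, 0; 0, 2, 0, 0; 0, 0, 1, 0] =
      !![0,1,0,0;0,0,1,0;0,0,0,0;0,0,0,0] := by
    ext i j
    fin_cases i <;> fin_cases j <;>
      simp [Matrix.mul_apply, Fin.sum_univ_four, Matrix.vecHead, Matrix.vecTail] <;>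
      linear_combination h3
  have hPTQ : (!![1,0,0,0;0,1,0,0;1,0,1,0;0,2,0,1] : Matrix (Fin 4) (Fin 4) k) *
      !![0, 1, 0, 0; 0, 0, 1, 0; 0, 2, 0, 0; 0, 0, 1, 0] *
      !![0,0,1,0;1,0,0,0;0,1,0,0;0,0,0,1] = Matrix.diagonal ![1,1,0,0] := by
    rw [hPT]
    ext i j
    fin_cases i <;> fin_cases j <;>
      simp [Matrix.mul_apply, Fin.sum_univ_four, Matrix.diagonal,
        Matrix.vecHead, Matrix.vecTail]
  have h1 : ((!![1,0,0,0;0,1,0,0;1,0,1,0;0,2,0,1] : Matrix (Fin 4) (Fin 4) k) *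
      !![0, 1, 0, 0; 0, 0, 1, 0; 0, 2, 0, 0; 0, 0, 1, 0] *
      !![0,0,1,0;1,0,0,0;0,1,0,0;0,0,0,1]).rank
      = (!![0, 1, 0, 0; 0, 0, 1, 0; 0, 2, 0, 0; 0, 0, 1, 0] : Matrix (Fin 4) (Fin 4) k).rank := by
    rw [Matrix.rank_mul_eq_left_of_isUnit_det _ _ hQ,
      Matrix.rank_mul_eq_right_of_isUnit_det _ _ hP]
  rw [← h1, hPTQ, Matrix.rank_diagonal]
  rw [Fintype.card_subtype]
  rw [show (Finset.univ.filter fun i : Fin 4 => ![(1:k),1,0,0] i ≠ 0) = {0, 1} from ?_]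
  · rfl
  · ext i
    fin_cases i <;> simp [Matrix.vecHead, Matrix.vecTail]

theorem stmt5 {k : Type*} [Field k] [IsAlgClosed k] [CharP k 3]
    (f : k[X]) (hf : f = X ^ 9 + C 2 * X ^ 7 + X ^ 3 + X) :
    disc9 f ≠ 0 ∧
      ∀ H : Matrix (Fin 4) (Fin 4) k,
        (∀ i j, H i j ^ 3 = !![0, 1, 0, 0; 0, 0, 1, 0; 0, 2, 0, 0; 0, 0, 1, 0] i j) →
        H.rank = 2 ∧ 4 - H.rank = 2 := by
  refine ⟨disc9_ne f hf, fun H hH => ?_⟩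
  have h := rank_part H hH
  exact ⟨h, by rw [h]⟩
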